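/- Let κ < 0, u₀ < 0, and let (u,v) solve u' = v/√(1+v²), v' = κu with u(0) = u₀, v(0) = 0. Let r₀ be the first positive zero of u. Then r₀ > √(u₀² - 2/κ) > √(-2/κ). -/

import Mathlib

/-- Pendent case: lower bound on the first positive zero. -/
theorem stmt_19 (κ u₀ : ℝ) (hκ : κ < 0) (hu₀ : u₀ < 0) (u v : ℝ → ℝ) (r₀ : ℝ)
    (hu : ∀ r : ℝ, HasDerivAt u (v r / Real.sqrt (1 + v r ^ 2)) r)
    (hv : ∀ r : ℝ, HasDerivAt v (κ * u r) r)
    (hu0 : u 0 = u₀) (hv0 : v 0 = 0)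
    (hr₀ : 0 < r₀) (hzero : u r₀ = 0)
    (hfirst : ∀ r ∈ Set.Ioo (0:ℝ) r₀, u r ≠ 0) :
    Real.sqrt (-2 / κ) < Real.sqrt (u₀ ^ 2 - 2 / κ) ∧
    Real.sqrt (u₀ ^ 2 - 2 / κ) < r₀ := by
  have hκu : 0 < κ * u₀ := mul_pos_of_neg_of_neg hκ hu₀
  set a : ℝ := 1 / (κ * u₀) with ha_def
  have ha : 0 < a := by positivity
  have hucont : Continuous u := by
    rw [continuous_iff_continuousAt]; exact fun x => (hu x).continuousAt
  have hvcont : Continuous v := by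
    rw [continuous_iff_continuousAt]; exact fun x => (hv x).continuousAt
  -- u < 0 on (0, r₀)
  have hneg : ∀ r ∈ Set.Ioo (0:ℝ) r₀, u r < 0 := by
    intro r hr
    by_contra h
    push_neg at h
    have hpos : 0 < u r := lt_of_le_of_ne h (Ne.symm (hfirst r hr))
    have : (0:ℝ) ∈ Set.Ioo (u 0) (u r) := by
      constructor
      · rw [hu0]; exact hu₀
      · exact hpos
    have := intermediate_value_Ioo (le_of_lt hr.1) hucont.continuousOn this
    obtain ⟨c, hc, hc0⟩ := this
    exact hfirst c ⟨hc.1, hc.2.trans hr.2⟩ hc0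
  -- v strictly increasing on [0, r₀]
  have hvmono : StrictMonoOn v (Set.Icc 0 r₀) := by
    apply strictMonoOn_of_deriv_pos (convex_Icc 0 r₀) hvcont.continuousOn
    intro x hx
    rw [interior_Icc] at hx
    rw [(hv x).deriv]
    exact mul_pos_of_neg_of_neg hκ (hneg x hx)
  have hvpos : ∀ r ∈ Set.Ioc (0:ℝ) r₀, 0 < v r := by
    intro r hr
    have := hvmono (Set.left_mem_Icc.mpr hr₀.le) ⟨hr.1.le, hr.2⟩ hr.1
    rwa [hv0] at this
  -- u strictly increasing on [0, r₀]
  have humono : StrictMonoOn u (Set.Icc 0 r₀) := by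
    apply strictMonoOn_of_deriv_pos (convex_Icc 0 r₀) hucont.continuousOn
    intro x hx
    rw [interior_Icc] at hx
    rw [(hu x).deriv]
    have h1 : 0 < v x := hvpos x ⟨hx.1, hx.2.le⟩
    have h2 : 0 < Real.sqrt (1 + v x ^ 2) := Real.sqrt_pos.mpr (by positivity)
    exact div_pos h1 h2
  -- v r < κ u₀ r on (0, r₀]
  have hvlt : ∀ r ∈ Set.Ioc (0:ℝ) r₀, v r < κ * u₀ * r := by
    intro r hr
    set w : ℝ → ℝ := fun r => κ * u₀ * r - v r with hw_def
    have hw : ∀ x : ℝ, HasDerivAt w (κ * u₀ - κ * u x) x := by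
      intro x
      exact (((hasDerivAt_id x).const_mul (κ * u₀)).sub (hv x)).congr_deriv (by ring)
    have hwmono : StrictMonoOn w (Set.Icc 0 r₀) := by
      apply strictMonoOn_of_deriv_pos (convex_Icc 0 r₀)
      · exact ((continuous_const.mul continuous_id).sub hvcont).continuousOn
      · intro x hx
        rw [interior_Icc] at hx
        rw [(hw x).deriv]
        have h1 : u₀ < u x := by
          have := humono (Set.left_mem_Icc.mpr hr₀.le) ⟨hx.1.le, hx.2.le⟩ hx.1
          rwa [hu0] at this
        have : κ * u₀ - κ * u x = κ * (u₀ - u x) := by ring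
        rw [this]
        exact mul_pos_of_neg_of_neg hκ (by linarith)
    have := hwmono (Set.left_mem_Icc.mpr hr₀.le) ⟨hr.1.le, hr.2⟩ hr.1
    simp only [hw_def, hv0] at this
    linarith [this]
  -- derivative of the hyperbola part
  have hsq : ∀ r : ℝ, HasDerivAt (fun r => Real.sqrt (r ^ 2 + a ^ 2))
      (r / Real.sqrt (r ^ 2 + a ^ 2)) r := by
    intro r
    have hpos : 0 < r ^ 2 + a ^ 2 := add_pos_of_nonneg_of_pos (sq_nonneg r) (pow_pos ha 2)
    have h1 : HasDerivAt (fun r : ℝ => r ^ 2 + a ^ 2) (2 * r) r := by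
      simpa using (hasDerivAt_pow 2 r).add_const (a ^ 2)
    have h2 := (Real.hasDerivAt_sqrt hpos.ne').comp r h1
    refine h2.congr_deriv ?_
    have hs : Real.sqrt (r ^ 2 + a ^ 2) ≠ 0 := (Real.sqrt_pos.mpr hpos).ne'
    rw [one_div, ← div_eq_inv_mul, mul_div_mul_left _ _ (two_ne_zero' ℝ)]
  -- g = hyperbola - u is strictly increasing on [0, r₀]
  set g : ℝ → ℝ := fun r => Real.sqrt (r ^ 2 + a ^ 2) + u₀ - a - u r with hg_def
  have hg : ∀ x : ℝ, HasDerivAt g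
      (x / Real.sqrt (x ^ 2 + a ^ 2) - v x / Real.sqrt (1 + v x ^ 2)) x := by
    intro x
    exact (((hsq x).add_const u₀).sub_const a).sub (hu x)
  have hgmono : StrictMonoOn g (Set.Icc 0 r₀) := by
    apply strictMonoOn_of_deriv_pos (convex_Icc 0 r₀)
    · exact ((((Continuous.sqrt (by continuity)).add continuous_const).sub
        continuous_const).sub hucont).continuousOn
    · intro x hx
      rw [interior_Icc] at hx
      rw [(hg x).deriv]
      have hxpos : 0 < x := hx.1
      have hvx : 0 < v x := hvpos x ⟨hx.1, hx.2.le⟩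
      have hvxa : v x * a < x := by
        have h1 : v x < κ * u₀ * x := hvlt x ⟨hx.1, hx.2.le⟩
        have h2 : v x * a < κ * u₀ * x * a := by
          exact mul_lt_mul_of_pos_right h1 ha
        have h3 : κ * u₀ * x * a = x := by
          field_simp [ha_def]
          rw [ha_def]; exact mul_one_div_cancel hκu.ne'
        linarith
      have hA : 0 < x ^ 2 + a ^ 2 := add_pos_of_nonneg_of_pos (sq_nonneg x) (pow_pos ha 2)
      have hB : (0:ℝ) < 1 + v x ^ 2 := by positivity
      have hsA : 0 < Real.sqrt (x ^ 2 + a ^ 2) := Real.sqrt_pos.mpr hA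
      have hsB : 0 < Real.sqrt (1 + v x ^ 2) := Real.sqrt_pos.mpr hB
      have key : v x / Real.sqrt (1 + v x ^ 2) < x / Real.sqrt (x ^ 2 + a ^ 2) := by
        rw [div_lt_div_iff₀ hsB hsA]
        have e1 : v x * Real.sqrt (x ^ 2 + a ^ 2)
            = Real.sqrt (v x ^ 2 * (x ^ 2 + a ^ 2)) := by
          rw [Real.sqrt_mul (sq_nonneg (v x)), Real.sqrt_sq hvx.le]
        have e2 : x * Real.sqrt (1 + v x ^ 2)
            = Real.sqrt (x ^ 2 * (1 + v x ^ 2)) := by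
          rw [Real.sqrt_mul (sq_nonneg x), Real.sqrt_sq hxpos.le]
        rw [e1, e2]
        apply Real.sqrt_lt_sqrt (by positivity)
        have : v x ^ 2 * a ^ 2 < x ^ 2 := by
          have := mul_self_lt_mul_self (by positivity : (0:ℝ) ≤ v x * a) hvxa
          nlinarith
        nlinarith
      linarith
  have hg0 : g 0 = 0 := by
    simp only [hg_def, hu0]
    have : Real.sqrt (0 ^ 2 + a ^ 2) = a := by
      rw [zero_pow (by norm_num), zero_add, Real.sqrt_sq ha.le]
    rw [this]; ring
  have hgr : 0 < g r₀ := by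
    have := hgmono (Set.left_mem_Icc.mpr hr₀.le) (Set.right_mem_Icc.mpr hr₀.le) hr₀
    rwa [hg0] at this
  -- extract the inequality
  have hkey : a - u₀ < Real.sqrt (r₀ ^ 2 + a ^ 2) := by
    simp only [hg_def, hzero] at hgr
    linarith
  have hsq2 : (a - u₀) ^ 2 < r₀ ^ 2 + a ^ 2 := by
    have hnn : (0:ℝ) ≤ a - u₀ := by linarith
    exact (Real.lt_sqrt hnn).mp hkey
  have hau : 2 * a * u₀ = 2 / κ := by
    rw [ha_def]
    field_simp [ne_of_lt hκ, ne_of_lt hu₀]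
  have hr2 : u₀ ^ 2 - 2 / κ < r₀ ^ 2 := by nlinarith
  have hκ2 : 0 < -2 / κ := by
    rw [div_pos_iff]; right; constructor <;> linarith
  have hu₀2 : 0 < u₀ ^ 2 := by nlinarith
  have hdiv : -2 / κ = -(2 / κ) := by ring
  constructor
  · apply Real.sqrt_lt_sqrt hκ2.le
    linarith
  · calc Real.sqrt (u₀ ^ 2 - 2 / κ) < Real.sqrt (r₀ ^ 2) :=
        Real.sqrt_lt_sqrt (by linarith) hr2
      _ = r₀ := Real.sqrt_sq hr₀.le
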